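/- (Duality argument for β > 0.) Assume the H²-regularity condition for the bulk-surface elliptic problem −Δφ = g_Ω in Ω, ∂_ν φ − βΔ_Γ φ + κφ = g_Γ on Γ (β, κ > 0): ‖φ‖²_{H²(Ω)} + ‖γφ‖²_{H²(Γ)} ≤ C₂(‖g_Ω‖²_{L²(Ω)} + ‖g_Γ‖²_{L²(Γ)}), and the first-order energy-norm Ritz error bound. Then the Ritz projection satisfies ‖u − R_h u‖²_{L²(Ω)} + μ‖γ(u − R_h u)‖²_{L²(Γ)} ≤ C h⁴ (‖u‖²_{H²(Ω)} + ‖γu‖²_{H²(Γ)}) for all u ∈ H²(Ω) with γu ∈ H²(Γ). -/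
import Mathlib

private lemma cs_aux {V : Type*} [AddCommGroup V] [Module ℝ V]
    (a : V →ₗ[ℝ] V →ₗ[ℝ] ℝ) (ha_symm : ∀ v w, a v w = a w v)
    (ha_pos : ∀ v, 0 ≤ a v v) (v w : V) :
    (a v w) ^ 2 ≤ a v v * a w w := by
  have hq : ∀ t : ℝ, 0 ≤ a w w * (t * t) + (2 * a v w) * t + a v v := by
    intro t
    have h1 := ha_pos (v + t • w)
    simp only [map_add, map_smul, LinearMap.add_apply, LinearMap.smul_apply,
      smul_eq_mul] at h1
    rw [ha_symm w v] at h1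
    nlinarith [h1]
  have h2 := discrim_le_zero hq
  unfold discrim at h2
  nlinarith

private lemma two_sq_aux (x y : ℝ) : (x + y) ^ 2 ≤ 2 * (x ^ 2 + y ^ 2) := by
  nlinarith [sq_nonneg (x - y)]

/-- Aubin–Nitsche duality argument for the Ritz projection in the bulk–surface
diffusion case `β > 0`.  Here `a(u,v) = ∫_Ω ∇u·∇v + κ∫_Γ(γu)(γv) + β∫_Γ ∇_Γu·∇_Γv`,
`LΩ` is the `L²(Ω)` inner product, `LΓ` the boundary `L²(Γ)` pairing
`(γu, γv)_{L²(Γ)}`, and `nH2`, `nH2Γ` the `H²(Ω)` and `H²(Γ)` norms.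
`H²`-regularity: for every `g` the dual problem `a(φ,v) = (g,v)_{L²(Ω)} + μ(γg,γv)_{L²(Γ)}`
has a solution `φ` with `‖φ‖²_{H²(Ω)} + ‖γφ‖²_{H²(Γ)} ≤ C₂(‖g‖²_{L²(Ω)} + μ²‖γg‖²_{L²(Γ)})`.
Conclusion: `‖u − R_h u‖²_{L²(Ω)} + μ‖γ(u − R_h u)‖²_{L²(Γ)} ≤ C' h⁴ (‖u‖²_{H²(Ω)} + ‖γu‖²_{H²(Γ)})`. -/
theorem ritz_second_order_bulk_surface
    {V : Type*} [AddCommGroup V] [Module ℝ V]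
    (a LΩ LΓ : V →ₗ[ℝ] V →ₗ[ℝ] ℝ)
    (ha_symm : ∀ v w, a v w = a w v) (ha_pos : ∀ v, 0 ≤ a v v)
    (hLΩ_symm : ∀ v w, LΩ v w = LΩ w v) (hLΩ_pos : ∀ v, 0 ≤ LΩ v v)
    (hLΓ_symm : ∀ v w, LΓ v w = LΓ w v) (hLΓ_pos : ∀ v, 0 ≤ LΓ v v)
    (β κ μ C₁ C₂ : ℝ) (hβ : 0 < β) (hκ : 0 < κ) (hμ : 0 < μ)
    (hC₁ : 0 < C₁) (hC₂ : 0 < C₂)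
    (nH2 nH2Γ : V → ℝ)
    -- the `H²`-regularity condition for the bulk–surface dual problem
    (hreg : ∀ g : V, ∃ φ : V,
      (∀ v : V, a φ v = LΩ g v + μ * LΓ g v) ∧
      (nH2 φ) ^ 2 + (nH2Γ φ) ^ 2 ≤ C₂ * (LΩ g g + μ ^ 2 * LΓ g g)) :
    ∃ C' > 0, ∀ h > (0:ℝ), ∀ (Vh : Submodule ℝ V) (Rh : V → V),
      -- `R_h` is the Ritz projection onto `V_h` (Galerkin orthogonality)
      (∀ w, Rh w ∈ Vh ∧ ∀ vh ∈ Vh, a (Rh w) vh = a w vh) →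
      -- first-order Ritz error bound in the energy norm
      (∀ w : V, Real.sqrt (a (w - Rh w) (w - Rh w)) ≤ C₁ * h * (nH2 w + nH2Γ w)) →
      ∀ u : V,
        LΩ (u - Rh u) (u - Rh u) + μ * LΓ (u - Rh u) (u - Rh u) ≤
          C' * h ^ 4 * ((nH2 u) ^ 2 + (nH2Γ u) ^ 2) := by
  set M : ℝ := max 1 μ with hM
  have hM1 : (1:ℝ) ≤ M := le_max_left _ _
  have hMμ : μ ≤ M := le_max_right _ _
  have hMpos0 : (0:ℝ) < M := lt_of_lt_of_le one_pos hM1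
  refine ⟨4 * C₂ * M * C₁ ^ 4, by positivity, ?_⟩
  intro h hh Vh Rh hRitz hEnergy u
  set e : V := u - Rh u with he
  obtain ⟨φ, hφa, hφreg⟩ := hreg e
  set E : ℝ := LΩ e e + μ * LΓ e e with hE
  have hE0 : 0 ≤ E := by
    have := hLΩ_pos e; have := hLΓ_pos e; positivity
  -- Galerkin orthogonality : a e vh = 0 for vh ∈ Vh
  have hGal : ∀ vh ∈ Vh, a e vh = 0 := by
    intro vh hvh
    have := (hRitz u).2 vh hvh
    simp only [he, map_sub, LinearMap.sub_apply]
    linarith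
  -- duality identity
  set eφ : V := φ - Rh φ with heφ
  have hdual : E = a eφ e := by
    have h1 : a φ e = E := by rw [hφa e]
    have h2 : a (Rh φ) e = 0 := by
      rw [ha_symm]; exact hGal (Rh φ) (hRitz φ).1
    simp only [heφ, map_sub, LinearMap.sub_apply]
    linarith
  -- energy-norm error bounds
  have hSqU : a e e ≤ (C₁ * h * (nH2 u + nH2Γ u)) ^ 2 := by
    have hb := hEnergy u
    have hnn : 0 ≤ Real.sqrt (a e e) := Real.sqrt_nonneg _
    have : Real.sqrt (a e e) ^ 2 ≤ (C₁ * h * (nH2 u + nH2Γ u)) ^ 2 := by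
      apply sq_le_sq' <;> nlinarith
    rwa [Real.sq_sqrt (ha_pos e)] at this
  have hSqΦ : a eφ eφ ≤ (C₁ * h * (nH2 φ + nH2Γ φ)) ^ 2 := by
    have hb := hEnergy φ
    have hnn : 0 ≤ Real.sqrt (a eφ eφ) := Real.sqrt_nonneg _
    have : Real.sqrt (a eφ eφ) ^ 2 ≤ (C₁ * h * (nH2 φ + nH2Γ φ)) ^ 2 := by
      apply sq_le_sq' <;> nlinarith
    rwa [Real.sq_sqrt (ha_pos eφ)] at this
  -- Cauchy–Schwarz for `a`
  have hCS : E ^ 2 ≤ a eφ eφ * a e e := by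
    rw [hdual]; exact cs_aux a ha_symm ha_pos eφ e
  -- bound on the dual solution
  have hMpos : (0:ℝ) < M := lt_of_lt_of_le one_pos hM1
  have h1 : LΩ e e + μ ^ 2 * LΓ e e ≤ M * E := by
    nlinarith [hE, mul_nonneg (sub_nonneg.mpr hMμ) (mul_nonneg hμ.le (hLΓ_pos e)),
      mul_nonneg (sub_nonneg.mpr hM1) (hLΩ_pos e)]
  have hφbound : (nH2 φ) ^ 2 + (nH2Γ φ) ^ 2 ≤ C₂ * (M * E) := by
    have := mul_le_mul_of_nonneg_left h1 hC₂.le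
    linarith
  have hφsum : (nH2 φ + nH2Γ φ) ^ 2 ≤ 2 * (C₂ * M * E) := by
    have := two_sq_aux (nH2 φ) (nH2Γ φ)
    linarith
  -- combine via Cauchy–Schwarz
  have hA : a eφ eφ ≤ (C₁ * h) ^ 2 * (2 * (C₂ * M * E)) := by
    calc a eφ eφ ≤ (C₁ * h * (nH2 φ + nH2Γ φ)) ^ 2 := hSqΦ
      _ = (C₁ * h) ^ 2 * (nH2 φ + nH2Γ φ) ^ 2 := by ring
      _ ≤ (C₁ * h) ^ 2 * (2 * (C₂ * M * E)) :=
          mul_le_mul_of_nonneg_left hφsum (sq_nonneg _)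
  have hkey : E ^ 2 ≤ (C₁ * h) ^ 2 * (2 * (C₂ * M * E)) * (C₁ * h * (nH2 u + nH2Γ u)) ^ 2 :=
    le_trans hCS (mul_le_mul hA hSqU (ha_pos e) (by positivity))
  -- cancel one factor of E
  rcases eq_or_lt_of_le hE0 with hE0' | hE0'
  · rw [← hE0']
    positivity
  · have hEle : E ≤ (C₁ * h) ^ 2 * (2 * (C₂ * M)) * (C₁ * h * (nH2 u + nH2Γ u)) ^ 2 := by
      have h3 := mul_le_mul_of_nonneg_right hkey (le_of_lt (inv_pos.mpr hE0'))
      have hcalc : E ^ 2 * E⁻¹ = E := by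
        rw [sq, mul_assoc, mul_inv_cancel₀ (ne_of_gt hE0'), mul_one]
      rw [hcalc] at h3
      calc E ≤ (C₁ * h) ^ 2 * (2 * (C₂ * M * E)) * (C₁ * h * (nH2 u + nH2Γ u)) ^ 2 * E⁻¹ := h3
        _ = (C₁ * h) ^ 2 * (2 * (C₂ * M)) * (C₁ * h * (nH2 u + nH2Γ u)) ^ 2 * (E * E⁻¹) := by
            ring
        _ = (C₁ * h) ^ 2 * (2 * (C₂ * M)) * (C₁ * h * (nH2 u + nH2Γ u)) ^ 2 := by
            rw [mul_inv_cancel₀ (ne_of_gt hE0'), mul_one]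
    refine le_trans hEle ?_
    have hsum : (nH2 u + nH2Γ u) ^ 2 ≤ 2 * ((nH2 u) ^ 2 + (nH2Γ u) ^ 2) :=
      two_sq_aux _ _
    calc (C₁ * h) ^ 2 * (2 * (C₂ * M)) * (C₁ * h * (nH2 u + nH2Γ u)) ^ 2
        = 2 * C₂ * M * C₁ ^ 4 * h ^ 4 * (nH2 u + nH2Γ u) ^ 2 := by ring
      _ ≤ 2 * C₂ * M * C₁ ^ 4 * h ^ 4 * (2 * ((nH2 u) ^ 2 + (nH2Γ u) ^ 2)) :=
          mul_le_mul_of_nonneg_left hsum (by positivity)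
      _ = 4 * C₂ * M * C₁ ^ 4 * h ^ 4 * ((nH2 u) ^ 2 + (nH2Γ u) ^ 2) := by ring
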